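/- Let P ⊆ (2^ℕ)^ω be a perfect product, m < ω, σ₀, τ₀ ∈ 2^m, and let B ⊆ P_{σ₀}, B' ⊆ P_{τ₀} be perfect products such that B ↾ D(σ₀,τ₀) = B' ↾ D(σ₀,τ₀), where D(σ,τ) = ω \ {φ(i) : i < m, σ(i) ≠ τ(i)}. Then there is a perfect product R ≤ₘ P with R_{σ₀} = B and R_{τ₀} = B'. -/

import Mathlib

/-- Cantor space `2^ℕ`. -/
abbrev Cantor := ℕ → Bool

/-- A perfect subset of Cantor space: nonempty, closed, no isolated points. -/
def PerfectSet (X : Set Cantor) : Prop := X.Nonempty ∧ Perfect X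

/-- The length of the stem of `X`: the length of the longest finite binary string
that is an initial segment of every element of `X`. -/
noncomputable def stemLen (X : Set Cantor) : ℕ :=
  sSup {n | ∀ x ∈ X, ∀ y ∈ X, ∀ i < n, x i = y i}

/-- Simple splitting piece `X^i = {x ∈ X | x(|stem X|) = i}`. -/
noncomputable def splitPiece (X : Set Cantor) (i : Bool) : Set Cantor :=
  {x ∈ X | x (stemLen X) = i}

/-- Iterated simple splitting `X_s`: `X_Λ = X`, `X_{s⌢i} = (X_s)^i`. -/
noncomputable def iterSplit (X : Set Cantor) (s : List Bool) : Set Cantor :=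
  s.foldl splitPiece X

/-- Refinement `X ≤ₙ Y`: `X_s ⊆ Y_s` for every binary string `s` of length `n`. -/
def refines (n : ℕ) (X Y : Set Cantor) : Prop :=
  ∀ s : List Bool, s.length = n → iterSplit X s ⊆ iterSplit Y s

/-- The perfect product `∏_k P(k) ⊆ (2^ℕ)^ω` determined by coordinatewise sets. -/
def prodSet (P : ℕ → Set Cantor) : Set (ℕ → Cantor) := {x | ∀ k, x k ∈ P k}

/-- `P` is a perfect product (given by its coordinates `P k`). -/
def PerfectProduct (P : ℕ → Set Cantor) : Prop := ∀ k, PerfectSet (P k)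

/-- `q(m,j) = |{k < m : φ(k) = j}|`. -/
def qcount (phi : ℕ → ℕ) (m j : ℕ) : ℕ :=
  ((Finset.range m).filter fun k => phi k = j).card

/-- `σ/j`: the substring of `σ` read along the positions `k < |σ|` with `φ(k) = j`. -/
def subAlong (phi : ℕ → ℕ) (j : ℕ) (σ : List Bool) : List Bool :=
  ((List.range σ.length).filter fun k => phi k = j).map fun k => σ.getD k false

/-- The split piece `P_σ` of a perfect product, coordinatewise: `P_σ(j) = (P(j))_{σ/j}`. -/
noncomputable def prodSplit (phi : ℕ → ℕ) (P : ℕ → Set Cantor) (σ : List Bool) :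
    ℕ → Set Cantor :=
  fun j => iterSplit (P j) (subAlong phi j σ)

/-- Refinement of perfect products: `P ≤ₘ Q` iff `P(j) ≤_{q(m,j)} Q(j)` for all `j`. -/
def prodRef (phi : ℕ → ℕ) (m : ℕ) (P Q : ℕ → Set Cantor) : Prop :=
  ∀ j, refines (qcount phi m j) (P j) (Q j)

/-- `D(σ,τ) = ω \ {φ(i) : i < m, σ(i) ≠ τ(i)}` (for strings of length `m`). -/
def Dset (phi : ℕ → ℕ) (m : ℕ) (σ τ : List Bool) : Set ℕ :=
  {j | ¬ ∃ i < m, σ.getD i false ≠ τ.getD i false ∧ phi i = j}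

lemma perfect_two {X : Set Cantor} (hX : PerfectSet X) : ∃ x ∈ X, ∃ y ∈ X, x ≠ y := by
  obtain ⟨x, hx⟩ := hX.1
  have h := hX.2.acc x hx
  rw [accPt_iff_nhds] at h
  obtain ⟨y, ⟨_, hyX⟩, hyx⟩ := h Set.univ Filter.univ_mem
  exact ⟨y, hyX, x, hx, hyx⟩

lemma agree_bdd {X : Set Cantor} (hX : PerfectSet X) :
    BddAbove {n | ∀ x ∈ X, ∀ y ∈ X, ∀ i < n, x i = y i} := by
  obtain ⟨x, hx, y, hy, hxy⟩ := perfect_two hX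
  have : ∃ i, x i ≠ y i := by
    by_contra h; push_neg at h; exact hxy (funext h)
  obtain ⟨i, hi⟩ := this
  refine ⟨i, fun p hp => ?_⟩
  by_contra h; push_neg at h
  exact hi (hp x hx y hy i h)

lemma stem_agree {X : Set Cantor} (hX : PerfectSet X) :
    ∀ x ∈ X, ∀ y ∈ X, ∀ i < stemLen X, x i = y i :=
  Nat.sSup_mem ⟨0, by simp⟩ (agree_bdd hX)

lemma stem_split {X : Set Cantor} (hX : PerfectSet X) :
    ∃ x ∈ X, ∃ y ∈ X, x (stemLen X) ≠ y (stemLen X) := by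
  have hnot : stemLen X + 1 ∉ {n | ∀ x ∈ X, ∀ y ∈ X, ∀ i < n, x i = y i} := by
    intro h
    have := le_csSup (agree_bdd hX) h
    simp [stemLen] at this
  simp only [Set.mem_setOf_eq] at hnot
  push_neg at hnot
  obtain ⟨x, hx, y, hy, i, hi, hne⟩ := hnot
  rcases Nat.lt_or_ge i (stemLen X) with h | h
  · exact absurd (stem_agree hX x hx y hy i h) hne
  · have : i = stemLen X := by omega
    exact ⟨x, hx, y, hy, this ▸ hne⟩

lemma splitPiece_nonempty {X : Set Cantor} (hX : PerfectSet X) (i : Bool) :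
    (splitPiece X i).Nonempty := by
  obtain ⟨x, hx, y, hy, hne⟩ := stem_split hX
  by_cases h : x (stemLen X) = i
  · exact ⟨x, hx, h⟩
  · refine ⟨y, hy, ?_⟩
    cases hxv : x (stemLen X) <;> cases hyv : y (stemLen X) <;> cases i <;> simp_all

lemma splitPiece_perfect {X : Set Cantor} (hX : PerfectSet X) (i : Bool) :
    PerfectSet (splitPiece X i) := by
  refine ⟨splitPiece_nonempty hX i, ?_, ?_⟩
  · exact hX.2.closed.inter (isClosed_eq (continuous_apply _) continuous_const)
  · intro x hx
    rw [accPt_iff_nhds]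
    intro U hU
    have hV : {y : Cantor | y (stemLen X) = i} ∈ nhds x := by
      have : IsOpen ((fun y : Cantor => y (stemLen X)) ⁻¹' {i}) :=
        (continuous_apply _).isOpen_preimage _ (isOpen_discrete _)
      exact this.mem_nhds hx.2
    have := accPt_iff_nhds.mp (hX.2.acc x hx.1) (U ∩ {y | y (stemLen X) = i})
      (Filter.inter_mem hU hV)
    obtain ⟨y, ⟨⟨hyU, hyV⟩, hyX⟩, hyx⟩ := this
    exact ⟨y, ⟨hyU, hyX, hyV⟩, hyx⟩

lemma iterSplit_subset (u : List Bool) : ∀ X : Set Cantor, iterSplit X u ⊆ X := by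
  induction u with
  | nil => intro X; exact subset_rfl
  | cons i u ih =>
    intro X
    exact (ih (splitPiece X i)).trans (fun x hx => hx.1)

lemma iterSplit_perfect (u : List Bool) : ∀ X : Set Cantor, PerfectSet X →
    PerfectSet (iterSplit X u) := by
  induction u with
  | nil => intro X hX; exact hX
  | cons i u ih => intro X hX; exact ih _ (splitPiece_perfect hX i)

lemma stem_union {X Y₀ Y₁ : Set Cantor} (hX : PerfectSet X)
    (h0 : Y₀ ⊆ splitPiece X false) (h1 : Y₁ ⊆ splitPiece X true)
    (ne0 : Y₀.Nonempty) (ne1 : Y₁.Nonempty) : stemLen (Y₀ ∪ Y₁) = stemLen X := by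
  obtain ⟨x₀, hx₀⟩ := ne0
  obtain ⟨x₁, hx₁⟩ := ne1
  have hx₀k : x₀ (stemLen X) = false := (h0 hx₀).2
  have hx₁k : x₁ (stemLen X) = true := (h1 hx₁).2
  have hsub : Y₀ ∪ Y₁ ⊆ X := by
    rintro x (hx | hx)
    · exact (h0 hx).1
    · exact (h1 hx).1
  have hset : {n | ∀ x ∈ Y₀ ∪ Y₁, ∀ y ∈ Y₀ ∪ Y₁, ∀ i < n, x i = y i} =
      {n | n ≤ stemLen X} := by
    ext p
    simp only [Set.mem_setOf_eq]
    constructor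
    · intro hp
      by_contra h
      push_neg at h
      have := hp x₀ (Or.inl hx₀) x₁ (Or.inr hx₁) (stemLen X) h
      rw [hx₀k, hx₁k] at this
      exact Bool.false_ne_true this
    · intro hp x hx y hy i hi
      exact stem_agree hX x (hsub hx) y (hsub hy) i (lt_of_lt_of_le hi hp)
  rw [stemLen, hset]
  exact csSup_Iic

lemma splitPiece_union {X Y₀ Y₁ : Set Cantor} (hX : PerfectSet X)
    (h0 : Y₀ ⊆ splitPiece X false) (h1 : Y₁ ⊆ splitPiece X true)
    (ne0 : Y₀.Nonempty) (ne1 : Y₁.Nonempty) :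
    splitPiece (Y₀ ∪ Y₁) false = Y₀ ∧ splitPiece (Y₀ ∪ Y₁) true = Y₁ := by
  have hk := stem_union hX h0 h1 ne0 ne1
  constructor <;> ext x <;> simp only [splitPiece, Set.mem_setOf_eq, hk]
  · constructor
    · rintro ⟨hx | hx, hv⟩
      · exact hx
      · rw [(h1 hx).2] at hv; exact absurd hv (by simp)
    · intro hx; exact ⟨Or.inl hx, (h0 hx).2⟩
  · constructor
    · rintro ⟨hx | hx, hv⟩
      · rw [(h0 hx).2] at hv; exact absurd hv (by simp)
      · exact hx
    · intro hx; exact ⟨Or.inr hx, (h1 hx).2⟩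

lemma perfect_union {Y₀ Y₁ : Set Cantor} (h0 : PerfectSet Y₀) (h1 : PerfectSet Y₁) :
    PerfectSet (Y₀ ∪ Y₁) := by
  refine ⟨h0.1.mono Set.subset_union_left, h0.2.closed.union h1.2.closed, ?_⟩
  rintro x (hx | hx)
  · exact (h0.2.acc x hx).mono (Filter.principal_mono.mpr Set.subset_union_left)
  · exact (h1.2.acc x hx).mono (Filter.principal_mono.mpr Set.subset_union_right)

lemma main_lemma : ∀ (n : ℕ) (X : Set Cantor), PerfectSet X →
    ∀ F : List Bool → Set Cantor,
      (∀ u, u.length = n → PerfectSet (F u) ∧ F u ⊆ iterSplit X u) →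
      ∃ Y, PerfectSet Y ∧ Y ⊆ X ∧ ∀ u, u.length = n → iterSplit Y u = F u := by
  intro n
  induction n with
  | zero =>
    intro X hX F hF
    refine ⟨F [], (hF [] rfl).1, (hF [] rfl).2, fun u hu => ?_⟩
    rw [List.length_eq_zero_iff] at hu
    subst hu; rfl
  | succ n ih =>
    intro X hX F hF
    obtain ⟨Y₀, hY₀p, hY₀s, hY₀⟩ := ih (splitPiece X false) (splitPiece_perfect hX false)
      (fun u => F (false :: u)) (fun u hu => hF (false :: u) (by simp [hu]))
    obtain ⟨Y₁, hY₁p, hY₁s, hY₁⟩ := ih (splitPiece X true) (splitPiece_perfect hX true)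
      (fun u => F (true :: u)) (fun u hu => hF (true :: u) (by simp [hu]))
    have hsp := splitPiece_union hX hY₀s hY₁s hY₀p.1 hY₁p.1
    refine ⟨Y₀ ∪ Y₁, perfect_union hY₀p hY₁p, ?_, ?_⟩
    · rintro x (hx | hx)
      · exact (hY₀s hx).1
      · exact (hY₁s hx).1
    · intro u hu
      match u with
      | [] => simp at hu
      | i :: u =>
        have hul : u.length = n := by simpa using hu
        have : iterSplit (Y₀ ∪ Y₁) (i :: u) = iterSplit (splitPiece (Y₀ ∪ Y₁) i) u := rfl
        rw [this]
        cases i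
        · rw [hsp.1]; exact hY₀ u hul
        · rw [hsp.2]; exact hY₁ u hul


lemma subAlong_length (phi : ℕ → ℕ) {m : ℕ} (j : ℕ) {σ : List Bool} (hσ : σ.length = m) :
    (subAlong phi j σ).length = qcount phi m j := by
  simp [subAlong, qcount, hσ, Finset.card, Finset.filter, Finset.range, Multiset.range]

lemma mem_D_of_subAlong_eq (phi : ℕ → ℕ) {m j : ℕ} {σ₀ τ₀ : List Bool}
    (hσ₀ : σ₀.length = m) (hτ₀ : τ₀.length = m)
    (h : subAlong phi j σ₀ = subAlong phi j τ₀) : j ∈ Dset phi m σ₀ τ₀ := by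
  rintro ⟨i, him, hne, hphi⟩
  rw [subAlong, subAlong, hσ₀, hτ₀, List.map_inj_left] at h
  exact hne (h i (by simp [List.mem_filter, List.mem_range, him, hphi]))

lemma coord_eq (phi : ℕ → ℕ) (m : ℕ) (σ₀ τ₀ : List Bool) (B B' : ℕ → Set Cantor)
    (hB : ∀ k, (B k).Nonempty) (hB' : ∀ k, (B' k).Nonempty)
    (hagree : (Dset phi m σ₀ τ₀).restrict '' prodSet B =
      (Dset phi m σ₀ τ₀).restrict '' prodSet B')
    {j : ℕ} (hj : j ∈ Dset phi m σ₀ τ₀) : B j = B' j := by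
  classical
  have key : ∀ (C C' : ℕ → Set Cantor), (∀ k, (C k).Nonempty) →
      (Dset phi m σ₀ τ₀).restrict '' prodSet C ⊆
        (Dset phi m σ₀ τ₀).restrict '' prodSet C' →
      C j ⊆ C' j := by
    intro C C' hC hsub b hb
    have hx : (fun k => if k = j then b else (hC k).some) ∈ prodSet C := by
      intro k
      by_cases h : k = j
      · subst h; simpa using hb
      · simpa [h] using (hC k).some_mem
    obtain ⟨x', hx', he⟩ := hsub ⟨_, hx, rfl⟩
    have hjb := congrFun he (⟨j, hj⟩ : (Dset phi m σ₀ τ₀))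
    have hjb : x' j = b := by
      have h2 : x' j = (if j = j then b else (hC j).some) := hjb
      simpa using h2
    rw [← hjb]
    exact hx' j
  exact Set.Subset.antisymm (key B B' hB hagree.subset) (key B' B hB' hagree.symm.subset)

/-- if perfect products `B ⊆ P_{σ₀}` and `B' ⊆ P_{τ₀}` agree on
`D(σ₀,τ₀)`, there is a perfect product `R ≤ₘ P` with `R_{σ₀} = B` and `R_{τ₀} = B'`. -/
theorem stmt8 (phi : ℕ → ℕ) (hphi : ∀ j, {k | phi k = j}.Infinite)
    (P : ℕ → Set Cantor) (hP : PerfectProduct P) (m : ℕ)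
    (σ₀ τ₀ : List Bool) (hσ₀ : σ₀.length = m) (hτ₀ : τ₀.length = m)
    (B B' : ℕ → Set Cantor) (hB : PerfectProduct B) (hB' : PerfectProduct B')
    (hBP : ∀ j, B j ⊆ prodSplit phi P σ₀ j)
    (hB'P : ∀ j, B' j ⊆ prodSplit phi P τ₀ j)
    (hagree : (Dset phi m σ₀ τ₀).restrict '' prodSet B =
      (Dset phi m σ₀ τ₀).restrict '' prodSet B') :
    ∃ R : ℕ → Set Cantor, PerfectProduct R ∧ prodRef phi m R P ∧
      prodSplit phi R σ₀ = B ∧ prodSplit phi R τ₀ = B' := by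
  classical
  set F : ℕ → List Bool → Set Cantor := fun j u =>
    if u = subAlong phi j σ₀ then B j
    else if u = subAlong phi j τ₀ then B' j
    else iterSplit (P j) u with hFdef
  have hF : ∀ j u, u.length = qcount phi m j →
      PerfectSet (F j u) ∧ F j u ⊆ iterSplit (P j) u := by
    intro j u hu
    by_cases h1 : u = subAlong phi j σ₀
    · subst h1
      simp only [hFdef, if_pos rfl]
      exact ⟨hB j, hBP j⟩
    · by_cases h2 : u = subAlong phi j τ₀
      · subst h2
        simp only [hFdef, if_neg h1, if_pos rfl]
        exact ⟨hB' j, hB'P j⟩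
      · simp only [hFdef, if_neg h1, if_neg h2]
        exact ⟨iterSplit_perfect u (P j) (hP j), subset_rfl⟩
  choose R hRp hRsub hR using fun j => main_lemma (qcount phi m j) (P j) (hP j) (F j) (hF j)
  refine ⟨R, hRp, ?_, ?_, ?_⟩
  · intro j u hu
    rw [hR j u hu]
    exact (hF j u hu).2
  · funext j
    show iterSplit (R j) (subAlong phi j σ₀) = B j
    rw [hR j _ (subAlong_length phi j hσ₀)]
    simp [hFdef]
  · funext j
    show iterSplit (R j) (subAlong phi j τ₀) = B' j
    rw [hR j _ (subAlong_length phi j hτ₀)]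
    by_cases h : subAlong phi j τ₀ = subAlong phi j σ₀
    · simp only [hFdef, if_pos h]
      exact coord_eq phi m σ₀ τ₀ B B' (fun k => (hB k).1) (fun k => (hB' k).1) hagree
        (mem_D_of_subAlong_eq phi hσ₀ hτ₀ h.symm)
    · simp [hFdef, h]
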